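/- For rounds t = 1, …, n, let S_t be a finite index set and x_{t,i} ∈ ℝ^d for i ∈ S_t, and let p_{t,i}(θ) denote the MNL choice probabilities on round t determined by {x_{t,j}}_{j∈S_t} (with outside-option probability p_{t,0}(θ)). Define J(θ) = ∑_{t=1}^n ∑_{i∈S_t} ( p_{t,i}(θ) − p_{t,i}(θ*) ) x_{t,i} and V = ∑_{t=1}^n ∑_{i∈S_t} x_{t,i} x_{t,i}ᵀ, and assume V is positive definite. Let η > 0 and κ_η > 0 be such that p_{t,i}(θ) p_{t,0}(θ) ≥ κ_η for every t, every i ∈ S_t, and every θ with ‖θ − θ*‖ ≤ η. Then for every θ with ‖θ − θ*‖ ≤ η, ‖J(θ)‖²_{V⁻¹} ≥ κ_η² λ_min(V) ‖θ − θ*‖₂². -/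

import Mathlib

set_option maxHeartbeats 400000

open Matrix

/-- The minimum eigenvalue of a Hermitian real matrix. -/
noncomputable def lambdaMin {d : ℕ} (A : Matrix (Fin d) (Fin d) ℝ)
    (hA : A.IsHermitian) : ℝ :=
  ⨅ i, hA.eigenvalues i

/-- MNL choice probability of item `i` in an assortment `S`. -/
noncomputable def mnlPS {d : ℕ} {ι : Type*} (S : Finset ι) (x : ι → Fin d → ℝ)
    (θ : Fin d → ℝ) (i : ι) : ℝ :=
  Real.exp (x i ⬝ᵥ θ) / (1 + ∑ j ∈ S, Real.exp (x j ⬝ᵥ θ))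

/-- MNL outside-option probability for an assortment `S`. -/
noncomputable def mnlPS0 {d : ℕ} {ι : Type*} (S : Finset ι) (x : ι → Fin d → ℝ)
    (θ : Fin d → ℝ) : ℝ :=
  1 / (1 + ∑ j ∈ S, Real.exp (x j ⬝ᵥ θ))

/- ## Auxiliary lemmas -/

lemma aux_rayleigh {d : ℕ} [NeZero d] (V : Matrix (Fin d) (Fin d) ℝ) (hV : V.IsHermitian)
    (u : Fin d → ℝ) :
    (⨅ i, hV.eigenvalues i) * (u ⬝ᵥ u) ≤ u ⬝ᵥ V *ᵥ u := by
  classical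
  set U : Matrix (Fin d) (Fin d) ℝ := (hV.eigenvectorUnitary : Matrix (Fin d) (Fin d) ℝ) with hU
  have hUU : U * star U = 1 :=
    (Matrix.mem_unitaryGroup_iff).mp (hV.eigenvectorUnitary).2
  have hUU' : star U * U = 1 :=
    (Matrix.mem_unitaryGroup_iff').mp (hV.eigenvectorUnitary).2
  set c : Fin d → ℝ := star U *ᵥ u with hc
  have hstar : star U = Uᵀ := by
    ext i j; simp [star, conjTranspose]
  have huc : U *ᵥ c = u := by
    rw [hc, Matrix.mulVec_mulVec, hUU, Matrix.one_mulVec]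
  have hdot : u ⬝ᵥ u = c ⬝ᵥ c := by
    conv_lhs => rw [← huc]
    rw [Matrix.dotProduct_mulVec, ← Matrix.mulVec_transpose, ← hstar, hc,
      Matrix.mulVec_mulVec, hUU', Matrix.one_mulVec]
  have hquad : u ⬝ᵥ V *ᵥ u = ∑ i, hV.eigenvalues i * (c i)^2 := by
    conv_lhs => rw [hV.spectral_theorem, Unitary.conjStarAlgAut_apply]
    rw [Matrix.mul_assoc, ← Matrix.mulVec_mulVec, ← Matrix.mulVec_mulVec,
      Matrix.dotProduct_mulVec, ← Matrix.mulVec_transpose, ← hstar, ← hc]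
    simp [Matrix.mulVec_diagonal, dotProduct, mul_comm, sq, mul_assoc, mul_left_comm]
  rw [hquad, hdot, dotProduct_comm, dotProduct, Finset.mul_sum]
  apply Finset.sum_le_sum
  intro i _
  have h1 : (⨅ i, hV.eigenvalues i) ≤ hV.eigenvalues i :=
    ciInf_le (Set.Finite.bddBelow (Set.finite_range _)) i
  nlinarith [mul_self_nonneg (c i)]

lemma aux_var_bd {ι : Type*} (S : Finset ι) (p a : ι → ℝ) (p0 κ : ℝ)
    (hpn : ∀ i ∈ S, 0 ≤ p i)
    (hsum : p0 + ∑ i ∈ S, p i = 1)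
    (hκ : ∀ i ∈ S, κ ≤ p i * p0) :
    κ * ∑ i ∈ S, (a i)^2 ≤ (∑ i ∈ S, p i * (a i)^2) - (∑ i ∈ S, p i * a i)^2 := by
  have hCS : (∑ i ∈ S, p i * a i)^2 ≤ (∑ i ∈ S, p i) * ∑ i ∈ S, p i * (a i)^2 :=
    Finset.sum_sq_le_sum_mul_sum_of_sq_eq_mul S hpn
      (fun i hi => mul_nonneg (hpn i hi) (sq_nonneg _)) (fun i hi => by ring)
  have hq : (0:ℝ) ≤ ∑ i ∈ S, p i * (a i)^2 :=
    Finset.sum_nonneg fun i hi => mul_nonneg (hpn i hi) (sq_nonneg _)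
  have h2 : κ * ∑ i ∈ S, (a i)^2 ≤ p0 * ∑ i ∈ S, p i * (a i)^2 := by
    rw [Finset.mul_sum, Finset.mul_sum]
    apply Finset.sum_le_sum
    intro i hi
    have := hκ i hi
    nlinarith [sq_nonneg (a i), hpn i hi]
  nlinarith

lemma aux_mnl_dot {d : ℕ} (x θstar u : Fin d → ℝ) (s : ℝ) :
    x ⬝ᵥ (θstar + s • u) = x ⬝ᵥ θstar + s * (x ⬝ᵥ u) := by
  rw [dotProduct_add, dotProduct_smul]; rfl

lemma aux_core_deriv {ι : Type*} (S : Finset ι) (B A : ι → ℝ) (i : ι) (s : ℝ) :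
    HasDerivAt (fun s : ℝ =>
        Real.exp (B i + s * A i) / (1 + ∑ j ∈ S, Real.exp (B j + s * A j)))
      ((Real.exp (B i + s * A i) / (1 + ∑ j ∈ S, Real.exp (B j + s * A j))) * A i -
       (Real.exp (B i + s * A i) / (1 + ∑ j ∈ S, Real.exp (B j + s * A j))) *
         ∑ j ∈ S, (Real.exp (B j + s * A j) /
            (1 + ∑ k ∈ S, Real.exp (B k + s * A k))) * A j) s := by
  classical
  have key : ∀ j : ι, HasDerivAt (fun s : ℝ => Real.exp (B j + s * A j))
      (A j * Real.exp (B j + s * A j)) s := by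
    intro j
    have h1 : HasDerivAt (fun s : ℝ => B j + s * A j) (A j) s := by
      simpa using ((hasDerivAt_id s).mul_const (A j)).const_add (B j)
    simpa [mul_comm] using h1.exp
  have hD : HasDerivAt (fun s : ℝ => 1 + ∑ j ∈ S, Real.exp (B j + s * A j))
      (∑ j ∈ S, A j * Real.exp (B j + s * A j)) s :=
    (HasDerivAt.fun_sum (fun j _ => key j)).const_add 1
  have hDpos : (0:ℝ) < 1 + ∑ j ∈ S, Real.exp (B j + s * A j) := by positivity
  have := (key i).div hD hDpos.ne'
  refine this.congr_deriv ?_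
  set D := 1 + ∑ j ∈ S, Real.exp (B j + s * A j) with hD'
  have hs : ∑ j ∈ S, Real.exp (B j + s * A j) / D * A j
      = (∑ j ∈ S, A j * Real.exp (B j + s * A j)) / D := by
    rw [Finset.sum_div]; exact Finset.sum_congr rfl fun j _ => by ring
  rw [hs]
  field_simp

lemma aux_hasDerivAt_mnl {d : ℕ} {ι : Type*} (S : Finset ι) (x : ι → Fin d → ℝ)
    (θstar u : Fin d → ℝ) (i : ι) (s : ℝ) :
    HasDerivAt (fun s : ℝ => mnlPS S x (θstar + s • u) i)
      (mnlPS S x (θstar + s • u) i * (x i ⬝ᵥ u) -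
       mnlPS S x (θstar + s • u) i *
         ∑ j ∈ S, mnlPS S x (θstar + s • u) j * (x j ⬝ᵥ u)) s := by
  have := aux_core_deriv S (fun j => x j ⬝ᵥ θstar) (fun j => x j ⬝ᵥ u) i s
  simp only [mnlPS, aux_mnl_dot]
  exact this

lemma aux_sum_dot {d : ℕ} {κ : Type*} (A : Finset κ) (f : κ → Fin d → ℝ) (u : Fin d → ℝ) :
    (∑ k ∈ A, f k) ⬝ᵥ u = ∑ k ∈ A, f k ⬝ᵥ u := by
  classical
  induction A using Finset.induction with
  | empty => simp
  | insert _ _ h ih => simp [Finset.sum_insert h, add_dotProduct, ih]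

lemma aux_quad_vecMulVec {d : ℕ} (w u : Fin d → ℝ) :
    u ⬝ᵥ (vecMulVec w w) *ᵥ u = (w ⬝ᵥ u)^2 := by
  have h : vecMulVec w w *ᵥ u = (w ⬝ᵥ u) • w := by
    ext i
    simp only [vecMulVec, Matrix.mulVec, dotProduct, Matrix.of_apply,
      Pi.smul_apply, smul_eq_mul, Finset.sum_mul]
    exact Finset.sum_congr rfl fun j _ => by ring
  rw [h, dotProduct_smul, smul_eq_mul, dotProduct_comm, sq]

lemma aux_dot_sum {d : ℕ} {κ : Type*} (A : Finset κ) (f : κ → Fin d → ℝ) (u : Fin d → ℝ) :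
    u ⬝ᵥ (∑ k ∈ A, f k) = ∑ k ∈ A, u ⬝ᵥ f k := by
  classical
  induction A using Finset.induction with
  | empty => simp
  | insert _ _ h ih => simp [Finset.sum_insert h, dotProduct_add, ih]

lemma aux_mnl_nonneg {d : ℕ} {ι : Type*} (S : Finset ι) (x : ι → Fin d → ℝ)
    (θ : Fin d → ℝ) (i : ι) : 0 ≤ mnlPS S x θ i := by
  rw [mnlPS]
  positivity

lemma aux_sum_one {d : ℕ} {ι : Type*} (S : Finset ι) (x : ι → Fin d → ℝ) (θ : Fin d → ℝ) :
    mnlPS0 S x θ + ∑ i ∈ S, mnlPS S x θ i = 1 := by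
  have hD : (0:ℝ) < 1 + ∑ j ∈ S, Real.exp (x j ⬝ᵥ θ) := by positivity
  rw [mnlPS0]
  simp only [mnlPS]
  rw [← Finset.sum_div]
  field_simp

lemma aux_expand {ι : Type*} (s : Finset ι) (p a : ι → ℝ) :
    ∑ i ∈ s, (p i * a i - p i * ∑ j ∈ s, p j * a j) * a i
      = (∑ i ∈ s, p i * a i * a i) - (∑ i ∈ s, p i * a i)^2 := by
  calc ∑ i ∈ s, (p i * a i - p i * ∑ j ∈ s, p j * a j) * a i
      = ∑ i ∈ s, (p i * a i * a i - p i * a i * ∑ j ∈ s, p j * a j) :=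
        Finset.sum_congr rfl fun i _ => by ring
    _ = (∑ i ∈ s, p i * a i * a i) - ∑ i ∈ s, (p i * a i * ∑ j ∈ s, p j * a j) :=
        Finset.sum_sub_distrib _ _
    _ = (∑ i ∈ s, p i * a i * a i) - (∑ i ∈ s, p i * a i)^2 := by
        rw [← Finset.sum_mul, sq]

lemma aux_sum_mulVec {d : ℕ} {κ : Type*} (A : Finset κ) (f : κ → Matrix (Fin d) (Fin d) ℝ)
    (u : Fin d → ℝ) : (∑ k ∈ A, f k) *ᵥ u = ∑ k ∈ A, f k *ᵥ u := by
  classical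
  induction A using Finset.induction with
  | empty => simp
  | insert _ _ h ih => simp [Finset.sum_insert h, Matrix.add_mulVec, ih]

/-- Strong-monotonicity lower bound for the expected MNL score function:
`‖J(θ)‖²_{V⁻¹} ≥ κ_η² λ_min(V) ‖θ − θ*‖₂²` for all `θ` with `‖θ − θ*‖ ≤ η`. -/
theorem stmt15 {d n : ℕ} {ι : Type*}
    (S : ℕ → Finset ι) (x : ℕ → ι → Fin d → ℝ) (θstar : Fin d → ℝ)
    (V : Matrix (Fin d) (Fin d) ℝ)
    (hVdef : V = ∑ t ∈ Finset.range n, ∑ i ∈ S t, vecMulVec (x t i) (x t i))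
    (hV : V.PosDef)
    (η κη : ℝ) (hη : 0 < η) (hκ : 0 < κη)
    (hp : ∀ t ∈ Finset.range n, ∀ i ∈ S t, ∀ θ : Fin d → ℝ,
      Real.sqrt (∑ j, (θ j - θstar j) ^ 2) ≤ η →
        κη ≤ mnlPS (S t) (x t) θ i * mnlPS0 (S t) (x t) θ)
    (J : (Fin d → ℝ) → Fin d → ℝ)
    (hJ : ∀ θ, J θ = ∑ t ∈ Finset.range n, ∑ i ∈ S t,
        (mnlPS (S t) (x t) θ i - mnlPS (S t) (x t) θstar i) • x t i) :
    ∀ θ : Fin d → ℝ, Real.sqrt (∑ j, (θ j - θstar j) ^ 2) ≤ η →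
      κη ^ 2 * lambdaMin V hV.isHermitian * (∑ j, (θ j - θstar j) ^ 2)
        ≤ J θ ⬝ᵥ V⁻¹ *ᵥ J θ := by
  classical
  intro θ hθ
  set u : Fin d → ℝ := fun j => θ j - θstar j with hu
  have hsum_sq : ∑ j, (θ j - θstar j) ^ 2 = u ⬝ᵥ u := by
    simp only [dotProduct, hu]
    exact Finset.sum_congr rfl fun j _ => pow_two _
  by_cases hu0 : u ⬝ᵥ u = 0
  · -- degenerate case θ = θstar
    have hθeq : θ = θstar := by
      funext j
      have h0 : ∑ j, (u j)^2 = 0 := by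
        rw [← hu0]; simp [dotProduct, sq]
      have := (Finset.sum_eq_zero_iff_of_nonneg
        (fun j _ => sq_nonneg (u j))).mp h0 j (Finset.mem_univ j)
      have : u j = 0 := by nlinarith [this]
      simpa [hu, sub_eq_zero] using this
    have hJ0 : J θ = 0 := by
      rw [hJ θ, hθeq]
      apply Finset.sum_eq_zero; intro t _
      apply Finset.sum_eq_zero; intro i _
      simp
    rw [hJ0, hsum_sq, hu0]
    simp
  -- main case
  have hune : u ≠ 0 := fun h => hu0 (by simp [h])
  have hd : 0 < d := by
    rcases Nat.eq_zero_or_pos d with h | h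
    · subst h; exact absurd (funext fun j => Fin.elim0 j) hune
    · exact h
  haveI : NeZero d := ⟨hd.ne'⟩
  have hθeq : θstar + (1:ℝ) • u = θ := by
    funext j; simp [hu]
  -- the quadratic form identity
  have hQuad : ∀ v : Fin d → ℝ, v ⬝ᵥ V *ᵥ v
      = ∑ t ∈ Finset.range n, ∑ i ∈ S t, (x t i ⬝ᵥ v)^2 := by
    intro v
    rw [hVdef, aux_sum_mulVec, aux_dot_sum]
    apply Finset.sum_congr rfl
    intro t _
    rw [aux_sum_mulVec, aux_dot_sum]
    exact Finset.sum_congr rfl fun i _ => aux_quad_vecMulVec _ _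
  set Q : ℝ := u ⬝ᵥ V *ᵥ u with hQ
  have hQpos : 0 < Q := by
    have := hV.dotProduct_mulVec_pos hune
    simpa [hQ] using this
  -- the path function and its derivative
  set φ : ℝ → ℝ := fun s => ∑ t ∈ Finset.range n, ∑ i ∈ S t,
      mnlPS (S t) (x t) (θstar + s • u) i * (x t i ⬝ᵥ u) with hφdef
  set Dφ : ℝ → ℝ := fun s => ∑ t ∈ Finset.range n,
      ((∑ i ∈ S t, mnlPS (S t) (x t) (θstar + s • u) i * (x t i ⬝ᵥ u) * (x t i ⬝ᵥ u)) -
       (∑ i ∈ S t, mnlPS (S t) (x t) (θstar + s • u) i * (x t i ⬝ᵥ u))^2) with hDφdef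
  have hφ : ∀ s : ℝ, HasDerivAt φ (Dφ s) s := by
    intro s
    apply HasDerivAt.fun_sum
    intro t _
    have inner : HasDerivAt (fun s : ℝ => ∑ i ∈ S t, mnlPS (S t) (x t) (θstar + s • u) i *
        (x t i ⬝ᵥ u))
        (∑ i ∈ S t, (mnlPS (S t) (x t) (θstar + s • u) i * (x t i ⬝ᵥ u) -
          mnlPS (S t) (x t) (θstar + s • u) i *
            ∑ j ∈ S t, mnlPS (S t) (x t) (θstar + s • u) j * (x t j ⬝ᵥ u)) * (x t i ⬝ᵥ u)) s :=
      HasDerivAt.fun_sum fun i _ => (aux_hasDerivAt_mnl (S t) (x t) θstar u i s).mul_const _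
    refine inner.congr_deriv ?_
    exact (aux_expand (S t) (fun i => mnlPS (S t) (x t) (θstar + s • u) i)
      (fun i => x t i ⬝ᵥ u))
  -- the derivative bound on [0,1]
  have hDφ_ge : ∀ s ∈ Set.Icc (0:ℝ) 1, κη * Q ≤ Dφ s := by
    intro s hs
    have hnorm : Real.sqrt (∑ j, ((θstar + s • u) j - θstar j) ^ 2) ≤ η := by
      have h1 : ∀ j, (θstar + s • u) j - θstar j = s * u j := by
        intro j; simp [hu]
      have h2 : ∑ j, ((θstar + s • u) j - θstar j) ^ 2 = s^2 * ∑ j, (u j)^2 := by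
        rw [Finset.mul_sum]
        exact Finset.sum_congr rfl fun j _ => by rw [h1]; ring
      rw [h2, Real.sqrt_mul (sq_nonneg s), Real.sqrt_sq_eq_abs,
        abs_of_nonneg hs.1]
      have h3 : Real.sqrt (∑ j, (u j)^2) ≤ η := by
        simpa [hu] using hθ
      have h4 : 0 ≤ Real.sqrt (∑ j, (u j)^2) := Real.sqrt_nonneg _
      nlinarith [hs.2]
    have hper : ∀ t ∈ Finset.range n,
        κη * ∑ i ∈ S t, (x t i ⬝ᵥ u)^2 ≤
        (∑ i ∈ S t, mnlPS (S t) (x t) (θstar + s • u) i * (x t i ⬝ᵥ u)^2) -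
        (∑ i ∈ S t, mnlPS (S t) (x t) (θstar + s • u) i * (x t i ⬝ᵥ u))^2 := by
      intro t ht
      refine aux_var_bd (S t) (fun i => mnlPS (S t) (x t) (θstar + s • u) i)
        (fun i => x t i ⬝ᵥ u) (mnlPS0 (S t) (x t) (θstar + s • u)) κη ?_ ?_ ?_
      · exact fun i _ => aux_mnl_nonneg (S t) (x t) (θstar + s • u) i
      · exact aux_sum_one (S t) (x t) (θstar + s • u)
      · intro i hi
        exact hp t ht i hi _ hnorm
    have : κη * Q = ∑ t ∈ Finset.range n, κη * ∑ i ∈ S t, (x t i ⬝ᵥ u)^2 := by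
      rw [hQ, hQuad, Finset.mul_sum]
    rw [this, hDφdef]
    apply Finset.sum_le_sum
    intro t ht
    have h := hper t ht
    have heq : ∑ i ∈ S t, mnlPS (S t) (x t) (θstar + s • u) i * (x t i ⬝ᵥ u) * (x t i ⬝ᵥ u)
        = ∑ i ∈ S t, mnlPS (S t) (x t) (θstar + s • u) i * (x t i ⬝ᵥ u)^2 :=
      Finset.sum_congr rfl fun i _ => by ring
    rw [heq]
    exact h
  -- mean value: J θ ⬝ᵥ u ≥ κη * Q
  have hJu : κη * Q ≤ J θ ⬝ᵥ u := by
    set C : ℝ := κη * Q with hC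
    have hψ : ∀ s : ℝ, HasDerivAt (fun s => φ s - s * C) (Dφ s - C) s :=
      fun s => (hφ s).sub (by simpa using (hasDerivAt_id s).mul_const C)
    have mono : MonotoneOn (fun s => φ s - s * C) (Set.Icc (0:ℝ) 1) := by
      apply monotoneOn_of_deriv_nonneg (convex_Icc 0 1)
      · exact fun s _ => ((hψ s).differentiableAt.continuousAt).continuousWithinAt
      · intro s _
        exact (hψ s).differentiableAt.differentiableWithinAt
      · intro s hs
        rw [(hψ s).deriv]
        rw [interior_Icc] at hs
        have h := hDφ_ge s ⟨hs.1.le, hs.2.le⟩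
        linarith
    have h01 := mono (Set.left_mem_Icc.mpr zero_le_one) (Set.right_mem_Icc.mpr zero_le_one)
      zero_le_one
    have hφ1 : φ 1 - φ 0 = J θ ⬝ᵥ u := by
      rw [hJ θ, aux_sum_dot, hφdef]
      simp only [hθeq, zero_smul, add_zero]
      rw [← Finset.sum_sub_distrib]
      apply Finset.sum_congr rfl
      intro t _
      rw [aux_sum_dot, ← Finset.sum_sub_distrib]
      apply Finset.sum_congr rfl
      intro i _
      rw [smul_dotProduct, smul_eq_mul]
      ring
    simp only [zero_mul, sub_zero, one_mul] at h01
    linarith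
  -- Cauchy-Schwarz with respect to V
  have hdet : IsUnit V.det := isUnit_iff_ne_zero.mpr hV.det_pos.ne'
  have hVsymm : Vᵀ = V := by
    ext i j
    have h := congrFun (congrFun hV.isHermitian i) j
    simpa [Matrix.conjTranspose_apply] using h
  set w : Fin d → ℝ := V⁻¹ *ᵥ J θ with hw
  have hVw : V *ᵥ w = J θ := by
    rw [hw, Matrix.mulVec_mulVec, Matrix.mul_nonsing_inv _ hdet, Matrix.one_mulVec]
  set T : ℝ := J θ ⬝ᵥ u with hT
  set R : ℝ := J θ ⬝ᵥ V⁻¹ *ᵥ J θ with hR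
  have hRw : R = w ⬝ᵥ V *ᵥ w := by
    rw [hVw, hR, hw, dotProduct_comm]
  have hwVu : w ⬝ᵥ V *ᵥ u = T := by
    rw [Matrix.dotProduct_mulVec, ← Matrix.mulVec_transpose, hVsymm, hVw, hT]
  have huVw : u ⬝ᵥ V *ᵥ w = T := by
    rw [hVw, hT, dotProduct_comm]
  have hCS : T^2 / Q ≤ R := by
    set c : ℝ := T / Q with hc
    have hpsd : 0 ≤ (w - c • u) ⬝ᵥ V *ᵥ (w - c • u) := by
        have := hV.posSemidef.dotProduct_mulVec_nonneg (w - c • u); rwa [star_trivial] at this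
    have hexp : (w - c • u) ⬝ᵥ V *ᵥ (w - c • u) = R - 2 * c * T + c^2 * Q := by
      simp only [Matrix.mulVec_sub, Matrix.mulVec_smul, sub_dotProduct,
        dotProduct_sub, smul_dotProduct, dotProduct_smul, smul_eq_mul]
      rw [hwVu, huVw, ← hQ, ← hRw]
      ring
    rw [hexp, hc] at hpsd
    have : R - 2 * (T/Q) * T + (T/Q)^2 * Q = R - T^2/Q := by
      field_simp
      ring
    rw [this] at hpsd
    linarith
  have hT2 : κη^2 * Q ≤ T^2 / Q := by
    rw [le_div_iff₀ hQpos]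
    have hTpos : 0 < T := lt_of_lt_of_le (mul_pos hκ hQpos) hJu
    nlinarith [hJu, hTpos, mul_pos hκ hQpos]
  have hray : lambdaMin V hV.isHermitian * (u ⬝ᵥ u) ≤ Q := by
    rw [hQ, lambdaMin]
    exact aux_rayleigh V hV.isHermitian u
  have hfinal : κη^2 * (lambdaMin V hV.isHermitian * (u ⬝ᵥ u)) ≤ κη^2 * Q :=
    mul_le_mul_of_nonneg_left hray (sq_nonneg κη)
  rw [hsum_sq]
  calc κη^2 * lambdaMin V hV.isHermitian * (u ⬝ᵥ u)
      = κη^2 * (lambdaMin V hV.isHermitian * (u ⬝ᵥ u)) := by ring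
    _ ≤ κη^2 * Q := hfinal
    _ ≤ T^2 / Q := hT2
    _ ≤ R := hCS
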